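/- For vectors x, y in R^n, x is strictly weakly majorized by y from above (i.e., for every k = 1,...,n, the sum of the k smallest entries of x is strictly greater than the sum of the k smallest entries of y) if and only if there exists a vector z in R^n with x_i > z_i for all i and z majorized by y. -/

import Mathlib

/-- Sum of the `k` smallest entries of `x`: the minimum of `∑ i ∈ s, x i`
over subsets `s` of cardinality `k`. -/
noncomputable def smallSum {n : ℕ} (x : Fin n → ℝ) (k : ℕ) : ℝ :=
  sInf ((fun s : Finset (Fin n) => ∑ i ∈ s, x i) '' {s | s.card = k})

/-- Sum of the `k` largest entries of `x`. -/
noncomputable def largeSum {n : ℕ} (x : Fin n → ℝ) (k : ℕ) : ℝ :=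
  sSup ((fun s : Finset (Fin n) => ∑ i ∈ s, x i) '' {s | s.card = k})

/-- `x` is majorized by `y` (`x ≼ y`). -/
def Majorized {n : ℕ} (x y : Fin n → ℝ) : Prop :=
  (∀ k, k ≤ n → largeSum x k ≤ largeSum y k) ∧ ∑ i, x i = ∑ i, y i

/-- `x ≼^w y`: weak majorization from above. -/
def WeakMajAbove {n : ℕ} (x y : Fin n → ℝ) : Prop :=
  ∀ k, 1 ≤ k → k ≤ n → smallSum y k ≤ smallSum x k

/-- `x ≺^w y`: strict weak majorization from above. -/
def StrictWeakMajAbove {n : ℕ} (x y : Fin n → ℝ) : Prop :=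
  ∀ k, 1 ≤ k → k ≤ n → smallSum y k < smallSum x k


open Finset


section API
variable {n : ℕ} (v : Fin n → ℝ) {k : ℕ}

lemma sumImage_finite (k : ℕ) :
    ((fun s : Finset (Fin n) => ∑ i ∈ s, v i) '' {s | s.card = k}).Finite :=
  Set.toFinite _

lemma sumImage_nonempty (hk : k ≤ n) :
    ((fun s : Finset (Fin n) => ∑ i ∈ s, v i) '' {s | s.card = k}).Nonempty := by
  obtain ⟨t, -, ht⟩ := Finset.exists_subset_card_eq (s := (univ : Finset (Fin n))) (n := k)
    (by simpa using hk)
  exact ⟨∑ i ∈ t, v i, t, ht, rfl⟩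

lemma smallSum_le {s : Finset (Fin n)} (hs : s.card = k) :
    smallSum v k ≤ ∑ i ∈ s, v i :=
  csInf_le (sumImage_finite v k).bddBelow ⟨s, hs, rfl⟩

lemma le_largeSum {s : Finset (Fin n)} (hs : s.card = k) :
    ∑ i ∈ s, v i ≤ largeSum v k :=
  le_csSup (sumImage_finite v k).bddAbove ⟨s, hs, rfl⟩

lemma le_smallSum {c : ℝ} (hk : k ≤ n)
    (h : ∀ s : Finset (Fin n), s.card = k → c ≤ ∑ i ∈ s, v i) :
    c ≤ smallSum v k := by
  refine le_csInf (sumImage_nonempty v hk) ?_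
  rintro _ ⟨s, hs, rfl⟩
  exact h s hs

lemma largeSum_le {c : ℝ} (hk : k ≤ n)
    (h : ∀ s : Finset (Fin n), s.card = k → ∑ i ∈ s, v i ≤ c) :
    largeSum v k ≤ c := by
  refine csSup_le (sumImage_nonempty v hk) ?_
  rintro _ ⟨s, hs, rfl⟩
  exact h s hs

lemma exists_smallSum (hk : k ≤ n) :
    ∃ s : Finset (Fin n), s.card = k ∧ smallSum v k = ∑ i ∈ s, v i := by
  have := (sumImage_nonempty v hk).csInf_mem (sumImage_finite v k)
  obtain ⟨s, hs, h⟩ := this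
  exact ⟨s, hs, h.symm⟩

lemma exists_largeSum (hk : k ≤ n) :
    ∃ s : Finset (Fin n), s.card = k ∧ largeSum v k = ∑ i ∈ s, v i := by
  have := (sumImage_nonempty v hk).csSup_mem (sumImage_finite v k)
  obtain ⟨s, hs, h⟩ := this
  exact ⟨s, hs, h.symm⟩

lemma largeSum_zero : largeSum v 0 = 0 := by
  obtain ⟨s, hs, h⟩ := exists_largeSum v (Nat.zero_le n)
  rw [h, Finset.card_eq_zero.mp hs, Finset.sum_empty]

lemma smallSum_top : smallSum v n = ∑ i, v i := by
  obtain ⟨s, hs, h⟩ := exists_smallSum v le_rfl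
  have : s = univ := by
    have := Finset.card_eq_iff_eq_univ s
    simp only [Fintype.card_fin] at this
    exact this.mp hs
  rw [h, this]

lemma largeSum_compl (hk : k ≤ n) :
    largeSum v k = (∑ i, v i) - smallSum v (n - k) := by
  apply le_antisymm
  · apply largeSum_le v hk
    intro s hs
    have h1 : smallSum v (n - k) ≤ ∑ i ∈ sᶜ, v i := by
      apply smallSum_le
      rw [Finset.card_compl, hs, Fintype.card_fin]
    have h2 : ∑ i ∈ s, v i + ∑ i ∈ sᶜ, v i = ∑ i, v i := Finset.sum_add_sum_compl s v
    linarith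
  · obtain ⟨t, ht, h⟩ := exists_smallSum v (Nat.sub_le n k)
    have h2 : ∑ i ∈ t, v i + ∑ i ∈ tᶜ, v i = ∑ i, v i := Finset.sum_add_sum_compl t v
    have h3 : ∑ i ∈ tᶜ, v i ≤ largeSum v k := by
      apply le_largeSum
      rw [Finset.card_compl, ht, Fintype.card_fin]
      omega
    linarith

lemma smallSum_compl (hk : k ≤ n) :
    smallSum v k = (∑ i, v i) - largeSum v (n - k) := by
  have := largeSum_compl v (Nat.sub_le n k)
  rw [Nat.sub_sub_self hk] at this
  linarith

end API

section API2
variable {n : ℕ} (v : Fin n → ℝ) {k : ℕ}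

lemma smallSum_zero : smallSum v 0 = 0 := by
  obtain ⟨s, hs, h⟩ := exists_smallSum v (Nat.zero_le n)
  rw [h, Finset.card_eq_zero.mp hs, Finset.sum_empty]

lemma smallSum_sub_const (c : ℝ) (hk : k ≤ n) :
    smallSum (fun i => v i - c) k = smallSum v k - k * c := by
  have expand : ∀ s : Finset (Fin n), s.card = k →
      ∑ i ∈ s, (v i - c) = (∑ i ∈ s, v i) - k * c := by
    intro s hs
    rw [Finset.sum_sub_distrib, Finset.sum_const, hs, nsmul_eq_mul]
  apply le_antisymm
  · obtain ⟨s, hs, h⟩ := exists_smallSum v hk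
    calc smallSum (fun i => v i - c) k ≤ ∑ i ∈ s, (v i - c) := smallSum_le _ hs
      _ = (∑ i ∈ s, v i) - k * c := expand s hs
      _ = smallSum v k - k * c := by rw [← h]
  · apply le_smallSum _ hk
    intro s hs
    rw [expand s hs]
    have := smallSum_le v hs
    linarith

end API2

lemma card_filter_mem_powersetCard {α : Type*} [DecidableEq α] (s : Finset α) (i : α)
    (hi : i ∈ s) (j : ℕ) (hj : 1 ≤ j) :
    ((s.powersetCard j).filter (fun u => i ∈ u)).card = (s.card - 1).choose (j - 1) := by
  rw [← Finset.card_erase_of_mem hi, ← Finset.card_powersetCard]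
  apply Finset.card_bij (fun u _ => u.erase i)
  · intro u hu
    simp only [Finset.mem_filter, Finset.mem_powersetCard] at hu
    obtain ⟨⟨hsub, hcard⟩, hmem⟩ := hu
    rw [Finset.mem_powersetCard]
    constructor
    · exact Finset.erase_subset_erase i hsub
    · rw [Finset.card_erase_of_mem hmem, hcard]
  · intro u hu v hv h
    simp only [Finset.mem_filter, Finset.mem_powersetCard] at hu hv
    have : insert i (u.erase i) = insert i (v.erase i) := by rw [h]
    rwa [Finset.insert_erase hu.2, Finset.insert_erase hv.2] at this
  · intro v hv
    rw [Finset.mem_powersetCard] at hv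
    obtain ⟨hsub, hcard⟩ := hv
    have hiv : i ∉ v := fun h => (Finset.mem_erase.mp (hsub h)).1 rfl
    refine ⟨insert i v, ?_, ?_⟩
    · simp only [Finset.mem_filter, Finset.mem_powersetCard]
      refine ⟨⟨?_, ?_⟩, Finset.mem_insert_self i v⟩
      · intro a ha
        rcases Finset.mem_insert.mp ha with h | h
        · exact h ▸ hi
        · exact Finset.erase_subset i s (hsub h)
      · rw [Finset.card_insert_of_notMem hiv, hcard]
        omega
    · rw [Finset.erase_insert hiv]

/-- Double counting: sum over all `j`-subsets of `s` of their sums. -/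
lemma sum_powersetCard_sum {n : ℕ} (y : Fin n → ℝ) (s : Finset (Fin n)) (j : ℕ) (hj : 1 ≤ j) :
    ∑ u ∈ s.powersetCard j, ∑ i ∈ u, y i
      = ((s.card - 1).choose (j - 1) : ℝ) * ∑ i ∈ s, y i := by
  have key : ∀ u ∈ s.powersetCard j, ∑ i ∈ u, y i = ∑ i ∈ s, (if i ∈ u then y i else 0) := by
    intro u hu
    rw [Finset.mem_powersetCard] at hu
    rw [Finset.sum_ite_mem, Finset.inter_comm, (Finset.inter_eq_left).mpr hu.1]
  rw [Finset.sum_congr rfl key, Finset.sum_comm, Finset.mul_sum]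
  apply Finset.sum_congr rfl
  intro i hi
  rw [← Finset.sum_filter, Finset.sum_const, card_filter_mem_powersetCard s i hi j hj,
    nsmul_eq_mul]

/-- Average of top-`j` decreases in `j`:  `j * T_b ≤ b * T_j` for `1 ≤ j ≤ b ≤ n`. -/
lemma largeSum_avg_mono {n : ℕ} (y : Fin n → ℝ) {j b : ℕ} (hj : 1 ≤ j) (hjb : j ≤ b)
    (hbn : b ≤ n) : (j : ℝ) * largeSum y b ≤ (b : ℝ) * largeSum y j := by
  obtain ⟨s, hs, hsum⟩ := exists_largeSum y hbn
  have hb1 : 1 ≤ b := le_trans hj hjb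
  have key : ∑ u ∈ s.powersetCard j, ∑ i ∈ u, y i
      ≤ (b.choose j : ℝ) * largeSum y j := by
    rw [← hs, ← Finset.card_powersetCard j s]
    calc ∑ u ∈ s.powersetCard j, ∑ i ∈ u, y i
        ≤ ∑ u ∈ s.powersetCard j, largeSum y j := by
          apply Finset.sum_le_sum
          intro u hu
          rw [Finset.mem_powersetCard] at hu
          exact le_largeSum y hu.2
      _ = ((s.powersetCard j).card : ℝ) * largeSum y j := by
          rw [Finset.sum_const, nsmul_eq_mul]
  rw [sum_powersetCard_sum y s j hj, hs, ← hsum] at key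
  have hnat : b * (b - 1).choose (j - 1) = b.choose j * j := by
    have := Nat.add_one_mul_choose_eq (b - 1) (j - 1)
    have h1 : b - 1 + 1 = b := by omega
    have h2 : j - 1 + 1 = j := by omega
    rwa [h1, h2] at this
  have hR : (b : ℝ) * ((b - 1).choose (j - 1) : ℝ) = (b.choose j : ℝ) * (j : ℝ) := by
    exact_mod_cast hnat
  have hcpos : (0 : ℝ) < ((b - 1).choose (j - 1) : ℝ) := by
    have : 0 < (b - 1).choose (j - 1) := Nat.choose_pos (by omega)
    exact_mod_cast this
  have hjnn : (0 : ℝ) ≤ (j : ℝ) := Nat.cast_nonneg j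
  have h3 := mul_le_mul_of_nonneg_left key hjnn
  have h2 : (j : ℝ) * ((b.choose j : ℝ) * largeSum y j)
      = ((b - 1).choose (j - 1) : ℝ) * ((b : ℝ) * largeSum y j) := by
    linear_combination (-(largeSum y j)) * hR
  have h5 : ((b - 1).choose (j - 1) : ℝ) * ((j : ℝ) * largeSum y b)
      ≤ ((b - 1).choose (j - 1) : ℝ) * ((b : ℝ) * largeSum y j) := by
    calc ((b - 1).choose (j - 1) : ℝ) * ((j : ℝ) * largeSum y b)
        = (j : ℝ) * (((b - 1).choose (j - 1) : ℝ) * largeSum y b) := by ring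
      _ ≤ (j : ℝ) * ((b.choose j : ℝ) * largeSum y j) := h3
      _ = _ := h2
  exact le_of_mul_le_mul_left h5 hcpos
/-- `x` is strictly weakly majorized from above by `y` iff there exists `z` with `z i < x i` for all `i` and `z` majorized by `y`. -/
theorem strictWeakMajAbove_iff_exists_lt {n : ℕ} (x y : Fin n → ℝ) :
    StrictWeakMajAbove x y ↔ ∃ z : Fin n → ℝ, (∀ i, z i < x i) ∧ Majorized z y := by
  constructor
  · intro hx
    rcases Nat.eq_zero_or_pos n with hn | hn
    · subst hn
      exact ⟨y, fun i => i.elim0, ⟨fun k _ => le_rfl, rfl⟩⟩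
    have hne : (Finset.Icc 1 n).Nonempty := ⟨1, Finset.mem_Icc.mpr ⟨le_rfl, hn⟩⟩
    set δ : ℝ := (Finset.Icc 1 n).inf' hne (fun k => smallSum x k - smallSum y k) with hδ
    have hδpos : 0 < δ := by
      rw [hδ, Finset.lt_inf'_iff]
      intro k hk
      rw [Finset.mem_Icc] at hk
      exact sub_pos.mpr (hx k hk.1 hk.2)
    set ε : ℝ := δ / n with hε
    have hεpos : 0 < ε := div_pos hδpos (by exact_mod_cast hn)
    have hδle : ∀ k, 1 ≤ k → k ≤ n → δ ≤ smallSum x k - smallSum y k := by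
      intro k h1 h2
      exact Finset.inf'_le _ (Finset.mem_Icc.mpr ⟨h1, h2⟩)
    have hnε : (n : ℝ) * ε = δ := by
      rw [hε]; field_simp
    -- the shifted vector
    set x' : Fin n → ℝ := fun i => x i - ε with hx'
    have hsmall' : ∀ k, k ≤ n → smallSum y k ≤ smallSum x' k := by
      intro k hkn
      rcases Nat.eq_zero_or_pos k with hk0 | hk1
      · subst hk0; rw [smallSum_zero, smallSum_zero]
      · rw [hx', smallSum_sub_const x ε hkn]
        have h1 : δ ≤ smallSum x k - smallSum y k := hδle k hk1 hkn
        have h2 : (k : ℝ) * ε ≤ (n : ℝ) * ε := by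
          apply mul_le_mul_of_nonneg_right _ (le_of_lt hεpos)
          exact_mod_cast hkn
        linarith [hnε]
    have hsumx' : ∑ i, y i ≤ ∑ i, x' i := by
      have := hsmall' n le_rfl
      rwa [smallSum_top, smallSum_top] at this
    -- find the clipping level M by IVT
    have : Nonempty (Fin n) := ⟨⟨0, hn⟩⟩
    set f : ℝ → ℝ := fun M => ∑ i, min (x' i) M with hf
    have hfc : Continuous f := by
      apply continuous_finset_sum
      intro i _
      exact continuous_const.min continuous_id
    set lo : ℝ := (∑ i, y i) / n with hlo
    set hi : ℝ := max lo ((univ : Finset (Fin n)).sup' Finset.univ_nonempty x') with hhi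
    have hflo : f lo ≤ ∑ i, y i := by
      calc f lo ≤ ∑ _i : Fin n, lo := Finset.sum_le_sum (fun i _ => min_le_right _ _)
        _ = (n : ℝ) * lo := by rw [Finset.sum_const, Finset.card_univ, Fintype.card_fin,
              nsmul_eq_mul]
        _ = ∑ i, y i := by rw [hlo]; field_simp
    have hfhi : ∑ i, y i ≤ f hi := by
      have : f hi = ∑ i, x' i := by
        apply Finset.sum_congr rfl
        intro i _
        apply min_eq_left
        exact le_trans (Finset.le_sup' x' (Finset.mem_univ i)) (le_max_right _ _)
      rw [this]; exact hsumx'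
    obtain ⟨M, -, hM⟩ := intermediate_value_Icc (le_max_left lo _) hfc.continuousOn
      ⟨hflo, hfhi⟩
    -- the vector z
    set z : Fin n → ℝ := fun i => min (x' i) M with hz
    have hsumz : ∑ i, z i = ∑ i, y i := hM
    have hzlt : ∀ i, z i < x i := by
      intro i
      calc z i ≤ x' i := min_le_left _ _
        _ < x i := sub_lt_self _ hεpos
    have hzleM : ∀ i, z i ≤ M := fun i => min_le_right _ _
    have hzlex' : ∀ i, z i ≤ x' i := fun i => min_le_left _ _
    -- the clipped set
    set B : Finset (Fin n) := univ.filter (fun i => M < x' i) with hB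
    set b : ℕ := B.card with hb
    have hbn : b ≤ n := by
      rw [hb]
      calc B.card ≤ (univ : Finset (Fin n)).card := Finset.card_le_card (Finset.filter_subset _ _)
        _ = n := by rw [Finset.card_univ, Fintype.card_fin]
    have hzB : ∀ i ∈ B, z i = M := by
      intro i hi
      rw [hB, Finset.mem_filter] at hi
      exact min_eq_right (le_of_lt hi.2)
    have hzBc : ∀ i ∉ B, z i = x' i := by
      intro i hi
      rw [hB, Finset.mem_filter] at hi
      push_neg at hi
      exact min_eq_left (hi (Finset.mem_univ i))
    have hx'Bc : ∀ i ∉ B, x' i ≤ M := by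
      intro i hi
      rw [hB, Finset.mem_filter] at hi
      push_neg at hi
      exact hi (Finset.mem_univ i)
    have hsplit : ∑ i ∈ Bᶜ, x' i + (b : ℝ) * M = ∑ i, y i := by
      have h1 : ∑ i ∈ B, z i + ∑ i ∈ Bᶜ, z i = ∑ i, z i := Finset.sum_add_sum_compl B z
      have h2 : ∑ i ∈ B, z i = (b : ℝ) * M := by
        rw [Finset.sum_congr rfl hzB, Finset.sum_const, hb, nsmul_eq_mul]
      have h3 : ∑ i ∈ Bᶜ, z i = ∑ i ∈ Bᶜ, x' i := by
        apply Finset.sum_congr rfl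
        intro i hi
        exact hzBc i (by simpa using hi)
      rw [h2, h3] at h1
      linarith [hsumz]
    -- Claim A : b * M ≤ largeSum y b
    have claimA : (b : ℝ) * M ≤ largeSum y b := by
      rcases Nat.eq_zero_or_pos b with hb0 | hb1
      · rw [hb0]; simp [largeSum_zero]
      · have h1 : smallSum y (n - b) ≤ ∑ i ∈ Bᶜ, x' i := by
          apply le_trans (hsmall' (n - b) (Nat.sub_le n b))
          apply smallSum_le
          rw [Finset.card_compl, ← hb, Fintype.card_fin]
        have h2 : smallSum y (n - b) = (∑ i, y i) - largeSum y b := by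
          have := smallSum_compl y (Nat.sub_le n b)
          rwa [Nat.sub_sub_self hbn] at this
        linarith
    -- Claim M : k * M ≤ largeSum y k for 1 ≤ k ≤ b
    have claimM : ∀ k, 1 ≤ k → k ≤ b → (k : ℝ) * M ≤ largeSum y k := by
      intro k hk1 hkb
      have hb1 : 1 ≤ b := le_trans hk1 hkb
      have havg := largeSum_avg_mono y hk1 hkb hbn
      have h1 : (k : ℝ) * ((b : ℝ) * M) ≤ (k : ℝ) * largeSum y b := by
        apply mul_le_mul_of_nonneg_left claimA (Nat.cast_nonneg k)
      have h2 : (b : ℝ) * ((k : ℝ) * M) ≤ (b : ℝ) * largeSum y k := by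
        calc (b : ℝ) * ((k : ℝ) * M) = (k : ℝ) * ((b : ℝ) * M) := by ring
          _ ≤ (k : ℝ) * largeSum y b := h1
          _ ≤ (b : ℝ) * largeSum y k := havg
      have hbpos : (0 : ℝ) < (b : ℝ) := by exact_mod_cast hb1
      exact le_of_mul_le_mul_left h2 hbpos
    -- per-set bottom bound
    have claimBot : ∀ m, m ≤ n - b → ∀ t : Finset (Fin n), t.card = m →
        smallSum y m ≤ ∑ i ∈ t, z i := by
      intro m hm t ht
      set j : ℕ := (t ∩ B).card with hj
      have hjm : j ≤ m := by
        rw [hj, ← ht]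
        exact Finset.card_le_card (Finset.inter_subset_left)
      have hcard_sdiff : (t \ B).card = m - j := by
        have := Finset.card_inter_add_card_sdiff t B
        omega
      have hcardBc : (Bᶜ \ t).card = (n - b) - (m - j) := by
        have h1 : (Bᶜ ∩ t).card = (t \ B).card := by
          congr 1
          ext a
          simp [Finset.mem_sdiff, Finset.mem_compl, Finset.mem_inter, and_comm]
        have h2 := Finset.card_sdiff_add_card_inter Bᶜ t
        have h3 : Bᶜ.card = n - b := by
          rw [Finset.card_compl, ← hb, Fintype.card_fin]
        omega
      have hjcard : j ≤ (Bᶜ \ t).card := by omega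
      obtain ⟨u, hu_sub, hu_card⟩ := Finset.exists_subset_card_eq hjcard
      have huM : ∀ i ∈ u, x' i ≤ M := by
        intro i hi
        have := hu_sub hi
        rw [Finset.mem_sdiff, Finset.mem_compl] at this
        exact hx'Bc i this.1
      have hdisj : Disjoint u (t \ B) := by
        apply Finset.disjoint_left.mpr
        intro a ha hat
        have := hu_sub ha
        rw [Finset.mem_sdiff] at this hat
        exact this.2 hat.1
      have hsum_t : ∑ i ∈ t, z i = (j : ℝ) * M + ∑ i ∈ t \ B, x' i := by
        have hsplit_t : ∑ i ∈ t, z i = ∑ i ∈ t ∩ B, z i + ∑ i ∈ t \ B, z i := by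
          rw [Finset.sum_inter_add_sum_sdiff]
        rw [hsplit_t]
        congr 1
        · rw [Finset.sum_congr rfl (fun i hi => hzB i (Finset.mem_of_mem_inter_right hi)),
            Finset.sum_const, ← hj, nsmul_eq_mul]
        · exact Finset.sum_congr rfl (fun i hi => hzBc i (Finset.mem_sdiff.mp hi).2)
      have hu_le : ∑ i ∈ u, x' i ≤ (j : ℝ) * M := by
        calc ∑ i ∈ u, x' i ≤ ∑ _i ∈ u, M := Finset.sum_le_sum huM
          _ = (j : ℝ) * M := by rw [Finset.sum_const, hu_card, nsmul_eq_mul]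
      have hunion : (u ∪ (t \ B)).card = m := by
        rw [Finset.card_union_of_disjoint hdisj, hu_card, hcard_sdiff]
        omega
      calc smallSum y m ≤ smallSum x' m := hsmall' m (by omega)
        _ ≤ ∑ i ∈ u ∪ (t \ B), x' i := smallSum_le x' hunion
        _ = ∑ i ∈ u, x' i + ∑ i ∈ t \ B, x' i := Finset.sum_union hdisj
        _ ≤ (j : ℝ) * M + ∑ i ∈ t \ B, x' i := by linarith
        _ = ∑ i ∈ t, z i := hsum_t.symm
    -- conclude
    refine ⟨z, hzlt, ?_, hsumz⟩
    intro k hkn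
    apply largeSum_le z hkn
    intro s hs
    rcases le_or_gt k b with hkb | hbk
    · rcases Nat.eq_zero_or_pos k with hk0 | hk1
      · subst hk0
        rw [Finset.card_eq_zero.mp hs, Finset.sum_empty, largeSum_zero]
      · calc ∑ i ∈ s, z i ≤ ∑ _i ∈ s, M := Finset.sum_le_sum (fun i _ => hzleM i)
          _ = (k : ℝ) * M := by rw [Finset.sum_const, hs, nsmul_eq_mul]
          _ ≤ largeSum y k := claimM k hk1 hkb
    · have hm : n - k ≤ n - b := by omega
      have hsc : sᶜ.card = n - k := by
        rw [Finset.card_compl, hs, Fintype.card_fin]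
      have h1 : smallSum y (n - k) ≤ ∑ i ∈ sᶜ, z i := claimBot (n - k) hm sᶜ hsc
      have h2 : ∑ i ∈ s, z i + ∑ i ∈ sᶜ, z i = ∑ i, z i := Finset.sum_add_sum_compl s z
      have h3 : largeSum y k = (∑ i, y i) - smallSum y (n - k) := largeSum_compl y hkn
      linarith [hsumz]
  · rintro ⟨z, hzx, hmaj, hsum⟩
    intro k hk1 hkn
    have h1 : smallSum y k ≤ smallSum z k := by
      rw [smallSum_compl y hkn, smallSum_compl z hkn]
      have := hmaj (n - k) (Nat.sub_le n k)
      linarith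
    have h2 : smallSum z k < smallSum x k := by
      obtain ⟨s, hscard, hsx⟩ := exists_smallSum x hkn
      have hsne : s.Nonempty := Finset.card_pos.mp (by omega)
      calc smallSum z k ≤ ∑ i ∈ s, z i := smallSum_le z hscard
        _ < ∑ i ∈ s, x i := Finset.sum_lt_sum_of_nonempty hsne (fun i _ => hzx i)
        _ = smallSum x k := hsx.symm
    linarith
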